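/- In the uncapacitated reduction gadget G_p^{α,β,γ} (defined as above), if the combined assignment (α, β, γ) satisfies at most p − 1 clauses, then the maximum α-γ flow in G_p^{α,β,γ} is at least m. -/
import Mathlib


attribute [local instance] Classical.propDecidable

/-- A feasible `s`-`t` flow in a directed capacitated graph given by `cap`:
capacity constraints on every edge and conservation at every vertex other than `s`, `t`. -/
def IsFlow {V : Type*} [Fintype V] (cap : V → V → ℕ) (s t : V) (f : V → V → ℕ) : Prop :=
  (∀ u v, f u v ≤ cap u v) ∧
  ∀ v, v ≠ s → v ≠ t → ∑ u, f u v = ∑ u, f v u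

/-- The maximum `s`-`t` flow value: the supremum of net flow out of `s` over feasible flows. -/
noncomputable def maxFlow {V : Type*} [Fintype V] (cap : V → V → ℕ) (s t : V) : ℕ :=
  sSup {x : ℕ | ∃ f, IsFlow cap s t f ∧ ∑ v, f s v = x + ∑ v, f v s}


/-- A CNF clause over variables `U1 ⊕ U2 ⊕ U3`. -/
abbrev Clause3 (U1 U2 U3 : Type*) := Finset ((U1 ⊕ U2 ⊕ U3) × Bool)

/-- The assignment `a` to `U1` satisfies the clause `C`. -/
def sat3A {U1 U2 U3 : Type*} (a : U1 → Bool) (C : Clause3 U1 U2 U3) : Prop :=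
  ∃ l ∈ C, ∃ x : U1, l.1 = Sum.inl x ∧ a x = l.2

/-- The assignment `b` to `U2` satisfies the clause `C`. -/
def sat3B {U1 U2 U3 : Type*} (b : U2 → Bool) (C : Clause3 U1 U2 U3) : Prop :=
  ∃ l ∈ C, ∃ x : U2, l.1 = Sum.inr (Sum.inl x) ∧ b x = l.2

/-- The assignment `g` to `U3` satisfies the clause `C`. -/
def sat3G {U1 U2 U3 : Type*} (g : U3 → Bool) (C : Clause3 U1 U2 U3) : Prop :=
  ∃ l ∈ C, ∃ x : U3, l.1 = Sum.inr (Sum.inr x) ∧ g x = l.2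

/-- Vertices of the uncapacitated reduction gadget `G_p^{α,β,γ}`. -/
inductive UGadV (m p : ℕ) where
  | src                    -- α
  | snk                    -- γ
  | bp                     -- β'
  | bl (i : Fin m)         -- β_i^l
  | br (i : Fin m)         -- β_i^r
  | bpj (j : Fin (p - 1))  -- β'_j
  deriving DecidableEq, Fintype

/-- Unit-capacity edges of `G_p^{α,β,γ}`, with `sA i`, `sB i`, `sG i` meaning
`α ⊨ C_i`, `β ⊨ C_i`, `γ ⊨ C_i`. -/
noncomputable def ucap {m p : ℕ} (sA sB sG : Fin m → Prop) : UGadV m p → UGadV m p → ℕ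
  | .src, .bl i => if ¬ sA i ∧ ¬ sB i then 1 else 0
  | .src, .br i => if sA i ∨ sB i then 1 else 0
  | .bl i, .snk => if ¬ sA i ∧ ¬ sB i ∧ ¬ sG i then 1 else 0
  | .bl i, .br j => if i = j then 1 else 0
  | .br _, .bp => 1
  | .bp, .bpj _ => 1
  | .bpj _, .snk => 1
  | _, _ => 0

section Aux

open Finset

/-- Equivalence between a sum type and the gadget vertices, to compute sums. -/
def gadEquiv (m p : ℕ) :
    (Unit ⊕ Unit ⊕ Unit ⊕ Fin m ⊕ Fin m ⊕ Fin (p - 1)) ≃ UGadV m p where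
  toFun x := match x with
    | .inl _ => .src
    | .inr (.inl _) => .snk
    | .inr (.inr (.inl _)) => .bp
    | .inr (.inr (.inr (.inl i))) => .bl i
    | .inr (.inr (.inr (.inr (.inl i)))) => .br i
    | .inr (.inr (.inr (.inr (.inr j)))) => .bpj j
  invFun v := match v with
    | .src => .inl ()
    | .snk => .inr (.inl ())
    | .bp => .inr (.inr (.inl ()))
    | .bl i => .inr (.inr (.inr (.inl i)))
    | .br i => .inr (.inr (.inr (.inr (.inl i))))
    | .bpj j => .inr (.inr (.inr (.inr (.inr j))))
  left_inv x := by rcases x with _ | _ | _ | _ | _ | _ <;> rfl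
  right_inv v := by cases v <;> rfl

lemma sum_gad {m p : ℕ} (G : UGadV m p → ℕ) :
    ∑ v, G v = G .src + G .snk + G .bp + (∑ i, G (.bl i)) + (∑ i, G (.br i))
      + ∑ j, G (.bpj j) := by
  rw [← Fintype.sum_equiv (gadEquiv m p) (fun x => G (gadEquiv m p x)) G (fun _ => rfl)]
  simp [Fintype.sum_sum_type, gadEquiv]
  ring

variable {m p : ℕ} (sA sB sG : Fin m → Prop)
  (e : {i : Fin m // sA i ∨ sB i ∨ sG i} → Fin (p - 1))

/-- The explicit flow of value `m`. -/
noncomputable def gflow : UGadV m p → UGadV m p → ℕ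
  | .src, .bl i => if ¬ sA i ∧ ¬ sB i then 1 else 0
  | .src, .br i => if sA i ∨ sB i then 1 else 0
  | .bl i, .snk => if ¬ sA i ∧ ¬ sB i ∧ ¬ sG i then 1 else 0
  | .bl i, .br j => if i = j ∧ ¬ sA i ∧ ¬ sB i ∧ sG i then 1 else 0
  | .br i, .bp => if sA i ∨ sB i ∨ sG i then 1 else 0
  | .bp, .bpj j => if ∃ i, e i = j then 1 else 0
  | .bpj j, .snk => if ∃ i, e i = j then 1 else 0
  | _, _ => 0

lemma gflow_le_cap (u v : UGadV m p) : gflow sA sB sG e u v ≤ ucap sA sB sG u v := by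
  cases u <;> cases v <;> simp [gflow, ucap] <;> split_ifs <;> simp_all

lemma gflow_conserve (he : Function.Injective e) (v : UGadV m p)
    (hv1 : v ≠ .src) (hv2 : v ≠ .snk) :
    ∑ u, gflow sA sB sG e u v = ∑ u, gflow sA sB sG e v u := by
  rw [sum_gad, sum_gad]
  cases v with
  | src => exact absurd rfl hv1
  | snk => exact absurd rfl hv2
  | bp =>
    simp only [gflow, Finset.sum_const_zero, add_zero, zero_add]
    rw [Finset.sum_boole, Finset.sum_boole, Nat.cast_id, Nat.cast_id]
    have h2 : (univ.filter fun j : Fin (p - 1) => ∃ i, e i = j) = univ.image e := by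
      ext j; simp [eq_comm]
    rw [h2, Finset.card_image_of_injective _ he, Finset.card_univ, Fintype.card_subtype]
  | bl i =>
    simp only [gflow, Finset.sum_const_zero, add_zero, zero_add]
    by_cases hA : sA i <;> by_cases hB : sB i <;> by_cases hG : sG i <;>
      simp [hA, hB, hG, Finset.sum_ite_eq]
  | br i =>
    simp only [gflow, Finset.sum_const_zero, add_zero, zero_add]
    have h : ∀ x : Fin m, (if x = i ∧ ¬ sA x ∧ ¬ sB x ∧ sG x then (1:ℕ) else 0)
        = if x = i then (if ¬ sA i ∧ ¬ sB i ∧ sG i then 1 else 0) else 0 := by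
      intro x; by_cases hx : x = i
      · subst hx; simp
      · simp [hx]
    rw [Finset.sum_congr rfl fun x _ => h x, Finset.sum_ite_eq' univ i]
    by_cases hA : sA i <;> by_cases hB : sB i <;> by_cases hG : sG i <;> simp [hA, hB, hG]
  | bpj j => simp [gflow]

end Aux

/-- if the combined assignment `(α, β, γ)` satisfies at most `p - 1` of the
`m` clauses, then the maximum `α`-`γ` flow in `G_p^{α,β,γ}` is at least `m`. -/
theorem stmt8 {U1 U2 U3 : Type*} {m : ℕ} (F : Fin m → Clause3 U1 U2 U3)
    (a : U1 → Bool) (b : U2 → Bool) (g : U3 → Bool) (p : ℕ)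
    (hp1 : 1 ≤ p) (hpm : p ≤ m)
    (hsat : (Finset.univ.filter fun i =>
        sat3A a (F i) ∨ sat3B b (F i) ∨ sat3G g (F i)).card ≤ p - 1) :
    m ≤ maxFlow
        (ucap (m := m) (p := p) (fun i => sat3A a (F i)) (fun i => sat3B b (F i))
          (fun i => sat3G g (F i)))
        UGadV.src UGadV.snk := by
  classical
  set sA : Fin m → Prop := fun i => sat3A a (F i)
  set sB : Fin m → Prop := fun i => sat3B b (F i)
  set sG : Fin m → Prop := fun i => sat3G g (F i)
  -- an injection from satisfied clauses into Fin (p-1)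
  have hcard : Fintype.card {i : Fin m // sA i ∨ sB i ∨ sG i} ≤ Fintype.card (Fin (p - 1)) := by
    rw [Fintype.card_subtype, Fintype.card_fin]
    exact hsat
  obtain ⟨e⟩ := Function.Embedding.nonempty_of_card_le hcard
  set f := gflow sA sB sG e with hf
  have hflow : IsFlow (ucap (m := m) (p := p) sA sB sG) UGadV.src UGadV.snk f :=
    ⟨gflow_le_cap sA sB sG e, fun v hv1 hv2 => gflow_conserve sA sB sG e e.injective v hv1 hv2⟩
  have hout : ∑ v, f UGadV.src v = m := by
    rw [hf, sum_gad]
    simp only [gflow, Finset.sum_const_zero, add_zero, zero_add]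
    rw [← Finset.sum_add_distrib]
    have : ∀ i ∈ Finset.univ, ((if ¬ sA i ∧ ¬ sB i then 1 else 0) : ℕ)
        + (if sA i ∨ sB i then 1 else 0) = 1 := by
      intro i _; by_cases hA : sA i <;> by_cases hB : sB i <;> simp [hA, hB]
    rw [Finset.sum_congr rfl this]
    simp
  have hin : ∑ v, f v UGadV.src = 0 := by
    rw [hf, sum_gad]; simp [gflow]
  have hmem : m ∈ {x : ℕ | ∃ f, IsFlow (ucap (m := m) (p := p) sA sB sG)
      UGadV.src UGadV.snk f ∧ ∑ v, f UGadV.src v = x + ∑ v, f v UGadV.src} :=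
    ⟨f, hflow, by rw [hout, hin]; ring⟩
  have hbdd : BddAbove {x : ℕ | ∃ f, IsFlow (ucap (m := m) (p := p) sA sB sG)
      UGadV.src UGadV.snk f ∧ ∑ v, f UGadV.src v = x + ∑ v, f v UGadV.src} := by
    refine ⟨∑ v, ucap (m := m) (p := p) sA sB sG UGadV.src v, ?_⟩
    rintro x ⟨f', hf', hval⟩
    calc x ≤ x + ∑ v, f' v UGadV.src := Nat.le_add_right _ _
      _ = ∑ v, f' UGadV.src v := hval.symm
      _ ≤ _ := Finset.sum_le_sum fun v _ => hf'.1 _ _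
  exact le_csSup hbdd hmem
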